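/- Let M be the 6×6 integer matrix with rows (2,0,1,1,1,1), (0,2,0,1,1,1), (1,0,2,1,1,1), (1,1,1,2,1,1), (1,1,1,1,2,1), (1,1,1,1,1,2). Then M is positive semidefinite, det(M) = 3, and M is sporadic, i.e., there is no x ∈ ℤ⁶ \ {0} such that M − x xᵀ is positive semidefinite. -/

import Mathlib

open Matrix

/-- Mordell's `6 × 6` matrix. -/
def mordellM : Matrix (Fin 6) (Fin 6) ℤ :=
  !![2, 0, 1, 1, 1, 1;
     0, 2, 0, 1, 1, 1;
     1, 0, 2, 1, 1, 1;
     1, 1, 1, 2, 1, 1;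
     1, 1, 1, 1, 2, 1;
     1, 1, 1, 1, 1, 2]

private lemma mordell_cons_val_five {α : Type*} {m : ℕ} (x : α) (u : Fin (m+5) → α) :
    vecCons x u 5 = vecHead (vecTail (vecTail (vecTail (vecTail u)))) := rfl

/-- The constraint `(v ⬝ x)² ≤ vᵀ M v` for `v = (p,q,r,s,t,u)`, `x = (a,b,c,d,e,f)`. -/
def mordellC (p q r s t u a b c d e f : ℤ) : Prop :=
  (p*a + q*b + r*c + s*d + t*e + u*f)^2 ≤
    2*p^2 + 2*q^2 + 2*r^2 + 2*s^2 + 2*t^2 + 2*u^2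
    + 2*p*r + 2*p*s + 2*p*t + 2*p*u + 2*q*s + 2*q*t + 2*q*u
    + 2*r*s + 2*r*t + 2*r*u + 2*s*t + 2*s*u + 2*t*u

instance (p q r s t u a b c d e f : ℤ) : Decidable (mordellC p q r s t u a b c d e f) := by
  unfold mordellC; infer_instance

set_option maxHeartbeats 4000000 in
set_option synthInstance.maxSize 4000 in
set_option synthInstance.maxHeartbeats 2000000 in
private lemma mordellAux :
    ∀ a ∈ Finset.Icc (-1:ℤ) 1, ∀ b ∈ Finset.Icc (-1:ℤ) 1, ∀ c ∈ Finset.Icc (-1:ℤ) 1,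
    ∀ d ∈ Finset.Icc (-1:ℤ) 1, ∀ e ∈ Finset.Icc (-1:ℤ) 1, ∀ f ∈ Finset.Icc (-1:ℤ) 1,
    mordellC (-1) (-2) (-1) (1) (1) (1) a b c d e f →
    mordellC (0) (-1) (0) (-2) (1) (1) a b c d e f →
    mordellC (-2) (-1) (0) (1) (-1) (2) a b c d e f →
    mordellC (-2) (0) (1) (0) (1) (-1) a b c d e f →
    mordellC (-1) (-1) (-2) (0) (2) (2) a b c d e f →
    mordellC (-1) (-2) (-1) (2) (1) (-1) a b c d e f →
    mordellC (-1) (-2) (0) (1) (2) (1) a b c d e f →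
    mordellC (-1) (-2) (-2) (0) (1) (1) a b c d e f →
    mordellC (-1) (-2) (1) (1) (0) (1) a b c d e f →
    mordellC (-2) (0) (1) (-1) (0) (1) a b c d e f →
    mordellC (-2) (-1) (-2) (1) (1) (1) a b c d e f →
    mordellC (-2) (-1) (-1) (0) (0) (2) a b c d e f →
    mordellC (-2) (-1) (-1) (0) (2) (0) a b c d e f →
    mordellC (-2) (-1) (-1) (2) (0) (0) a b c d e f →
    mordellC (-2) (-1) (-1) (2) (0) (2) a b c d e f →
    mordellC (-2) (-1) (-1) (2) (2) (0) a b c d e f →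
    mordellC (-2) (-1) (0) (1) (1) (2) a b c d e f →
    mordellC (-2) (-1) (1) (0) (0) (0) a b c d e f →
    mordellC (-2) (-1) (1) (0) (0) (2) a b c d e f →
    mordellC (-2) (-1) (1) (0) (2) (0) a b c d e f →
    mordellC (-2) (-1) (1) (2) (0) (0) a b c d e f →
    mordellC (-2) (1) (1) (0) (0) (0) a b c d e f →
    mordellC (-1) (-2) (-1) (1) (-1) (2) a b c d e f →
    mordellC (-4) (-4) (-2) (2) (2) (3) a b c d e f →
    mordellC (-2) (-4) (-4) (2) (2) (3) a b c d e f →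
    mordellC (-3) (-4) (-3) (4) (2) (2) a b c d e f →
    mordellC (-3) (-4) (-3) (2) (4) (2) a b c d e f →
    mordellC (-3) (-4) (-3) (2) (2) (4) a b c d e f →
    a = 0 ∧ b = 0 ∧ c = 0 ∧ d = 0 ∧ e = 0 ∧ f = 0 := by
  decide

set_option maxHeartbeats 4000000 in
set_option maxRecDepth 40000 in
/-- The matrix `M` is positive semidefinite, has determinant `3`, and
is sporadic: no nonzero `x ∈ ℤ⁶` satisfies `M - x xᵀ ⪰ 0`. -/
theorem mordellM_psd_det_three_sporadic :
    (mordellM.map (Int.cast : ℤ → ℝ)).PosSemidef ∧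
    mordellM.det = 3 ∧
    ¬ ∃ x : Fin 6 → ℤ, x ≠ 0 ∧
      ((mordellM - Matrix.vecMulVec x x).map (Int.cast : ℤ → ℝ)).PosSemidef := by
  refine ⟨posSemidef_iff_dotProduct_mulVec.mpr ⟨?_, ?_⟩, ?_, ?_⟩
  · -- Hermitian
    ext i j
    fin_cases i <;> fin_cases j <;>
      simp [mordellM, Matrix.conjTranspose_apply, Matrix.vecHead, Matrix.vecTail,
        mordell_cons_val_five]
  · -- nonnegative quadratic form
    intro v
    simp only [star_trivial, dotProduct, mulVec, mordellM, Fin.sum_univ_six, Matrix.map_apply,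
      Matrix.cons_val_zero, Matrix.cons_val_one, Matrix.head_cons, Matrix.cons_val_two,
      Matrix.cons_val_succ, Matrix.tail_cons, Matrix.cons_val_three, Matrix.cons_val_four,
      mordell_cons_val_five, Matrix.vecHead, Matrix.vecTail, Matrix.of_apply,
      Matrix.cons_val', Matrix.empty_val', Matrix.cons_val_fin_one, Function.comp]
    push_cast
    nlinarith [sq_nonneg (2*v 0 + v 2 + v 3 + v 4 + v 5), sq_nonneg (2*v 1 + v 3 + v 4 + v 5),
      sq_nonneg (3*v 2 + v 3 + v 4 + v 5), sq_nonneg (v 3 - v 4), sq_nonneg (v 4 - v 5),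
      sq_nonneg (v 3 - v 5), sq_nonneg (v 3), sq_nonneg (v 4), sq_nonneg (v 5)]
  · -- determinant
    simp only [mordellM, Matrix.det_succ_row_zero, Fin.sum_univ_succ, Matrix.submatrix_apply,
      Fin.zero_succAbove, Fin.succ_succAbove_zero, Fin.succ_succAbove_succ, Matrix.cons_val_succ,
      Matrix.cons_val_zero, Matrix.of_apply, Matrix.cons_val', Matrix.empty_val',
      Matrix.cons_val_fin_one, Matrix.det_unique, Fin.default_eq_zero, Finset.univ_unique,
      Fin.val_zero, Fin.val_succ, Matrix.head_cons, Matrix.head_fin_const, Matrix.tail_cons,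
      Finset.sum_singleton, Finset.sum_const, Finset.card_singleton, one_smul, smul_neg]
    norm_num
  · -- sporadic
    rintro ⟨x, hx, hpsd⟩
    have key : ∀ p q r s t u : ℤ,
        mordellC p q r s t u (x 0) (x 1) (x 2) (x 3) (x 4) (x 5) := by
      intro p q r s t u
      have h0 := hpsd.dotProduct_mulVec_nonneg ![(p:ℝ), (q:ℝ), (r:ℝ), (s:ℝ), (t:ℝ), (u:ℝ)]
      simp only [star_trivial, dotProduct, mulVec, mordellM, Fin.sum_univ_six, Matrix.map_apply,
        Matrix.sub_apply, Matrix.vecMulVec_apply,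
        Matrix.cons_val_zero, Matrix.cons_val_one, Matrix.head_cons, Matrix.cons_val_two,
        Matrix.cons_val_succ, Matrix.tail_cons, Matrix.cons_val_three, Matrix.cons_val_four,
        mordell_cons_val_five, Matrix.vecHead, Matrix.vecTail, Matrix.of_apply,
        Matrix.cons_val', Matrix.empty_val', Matrix.cons_val_fin_one, Function.comp] at h0
      push_cast at h0
      unfold mordellC
      have hr : ((p*x 0 + q*x 1 + r*x 2 + s*x 3 + t*x 4 + u*x 5 : ℤ) : ℝ)^2 ≤
          ((2*p^2 + 2*q^2 + 2*r^2 + 2*s^2 + 2*t^2 + 2*u^2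
          + 2*p*r + 2*p*s + 2*p*t + 2*p*u + 2*q*s + 2*q*t + 2*q*u
          + 2*r*s + 2*r*t + 2*r*u + 2*s*t + 2*s*u + 2*t*u : ℤ) : ℝ) := by
        push_cast
        nlinarith [h0]
      exact_mod_cast hr
    have m0 : x 0 ∈ Finset.Icc (-1:ℤ) 1 := by
      have h := key 1 0 0 0 0 0; unfold mordellC at h
      rw [Finset.mem_Icc]; constructor <;> nlinarith [h]
    have m1 : x 1 ∈ Finset.Icc (-1:ℤ) 1 := by
      have h := key 0 1 0 0 0 0; unfold mordellC at h
      rw [Finset.mem_Icc]; constructor <;> nlinarith [h]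
    have m2 : x 2 ∈ Finset.Icc (-1:ℤ) 1 := by
      have h := key 0 0 1 0 0 0; unfold mordellC at h
      rw [Finset.mem_Icc]; constructor <;> nlinarith [h]
    have m3 : x 3 ∈ Finset.Icc (-1:ℤ) 1 := by
      have h := key 0 0 0 1 0 0; unfold mordellC at h
      rw [Finset.mem_Icc]; constructor <;> nlinarith [h]
    have m4 : x 4 ∈ Finset.Icc (-1:ℤ) 1 := by
      have h := key 0 0 0 0 1 0; unfold mordellC at h
      rw [Finset.mem_Icc]; constructor <;> nlinarith [h]
    have m5 : x 5 ∈ Finset.Icc (-1:ℤ) 1 := by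
      have h := key 0 0 0 0 0 1; unfold mordellC at h
      rw [Finset.mem_Icc]; constructor <;> nlinarith [h]
    obtain ⟨e0, e1, e2, e3, e4, e5⟩ :=
      mordellAux (x 0) m0 (x 1) m1 (x 2) m2 (x 3) m3 (x 4) m4 (x 5) m5
      (key (-1) (-2) (-1) (1) (1) (1))
      (key (0) (-1) (0) (-2) (1) (1))
      (key (-2) (-1) (0) (1) (-1) (2))
      (key (-2) (0) (1) (0) (1) (-1))
      (key (-1) (-1) (-2) (0) (2) (2))
      (key (-1) (-2) (-1) (2) (1) (-1))
      (key (-1) (-2) (0) (1) (2) (1))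
      (key (-1) (-2) (-2) (0) (1) (1))
      (key (-1) (-2) (1) (1) (0) (1))
      (key (-2) (0) (1) (-1) (0) (1))
      (key (-2) (-1) (-2) (1) (1) (1))
      (key (-2) (-1) (-1) (0) (0) (2))
      (key (-2) (-1) (-1) (0) (2) (0))
      (key (-2) (-1) (-1) (2) (0) (0))
      (key (-2) (-1) (-1) (2) (0) (2))
      (key (-2) (-1) (-1) (2) (2) (0))
      (key (-2) (-1) (0) (1) (1) (2))
      (key (-2) (-1) (1) (0) (0) (0))
      (key (-2) (-1) (1) (0) (0) (2))
      (key (-2) (-1) (1) (0) (2) (0))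
      (key (-2) (-1) (1) (2) (0) (0))
      (key (-2) (1) (1) (0) (0) (0))
      (key (-1) (-2) (-1) (1) (-1) (2))
      (key (-4) (-4) (-2) (2) (2) (3))
      (key (-2) (-4) (-4) (2) (2) (3))
      (key (-3) (-4) (-3) (4) (2) (2))
      (key (-3) (-4) (-3) (2) (4) (2))
      (key (-3) (-4) (-3) (2) (2) (4))
    apply hx
    funext i
    fin_cases i
    exacts [e0, e1, e2, e3, e4, e5]
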